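/- If only a subset S ⊆ {1,...,K} of players transmit at the operating point for |S| = k players (powers p_i = (σ²/η_i)·γ̃_k/(1-(k-1)γ̃_k) for i ∈ S, p_i = 0 otherwise), then each transmitting player i ∈ S has utility u_i = (R η_i/σ²) · f(γ̃_k) · (1-(k-1)γ̃_k)/γ̃_k, which is increasing in η_i. Consequently, for a fixed number k of active players, total utility Σ_{i∈S} u_i is maximized by choosing S to be the k players with the largest channel gains. -/

import Mathlib

/-- BUS scheme, Theorem 2: if only the players of a subset S with |S| = k
transmit at the k-player operating point, each active player i has utility
u_i = (R η_i/σ²) f(γ̃_k)(1-(k-1)γ̃_k)/γ̃_k, which is increasing in η_i; hence for fixed k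
total utility is maximized by picking the k players with the largest gains. -/
theorem bus_best_subset (K : ℕ) (η : Fin K → ℝ) (hη : ∀ i, 0 < η i)
    (σ2 R : ℝ) (hσ : 0 < σ2) (hR : 0 < R)
    (k : ℕ) (hk : 1 ≤ k)
    (γ : ℝ) (hγ0 : 0 < γ) (hγ1 : ((k : ℝ) - 1) * γ < 1)
    (f : ℝ → ℝ) (hfγ : 0 < f γ)
    (p : Finset (Fin K) → Fin K → ℝ)
    (hp : ∀ S i, p S i =
      if i ∈ S then (σ2 / η i) * (γ / (1 - ((k : ℝ) - 1) * γ)) else 0)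
    (u : Finset (Fin K) → Fin K → ℝ)
    (hu : ∀ S i, u S i =
      if i ∈ S then
        R * f (p S i * η i / ((∑ j ∈ S.erase i, p S j * η j) + σ2)) / p S i
      else 0) :
    (∀ S : Finset (Fin K), S.card = k → ∀ i ∈ S,
      u S i = (R * η i / σ2) * f γ * (1 - ((k : ℝ) - 1) * γ) / γ) ∧
    (∀ S : Finset (Fin K), S.card = k → ∀ i ∈ S, ∀ j ∈ S,
      η i < η j → u S i < u S j) ∧
    (∀ S T : Finset (Fin K), S.card = k → T.card = k →
      (∀ i ∈ T \ S, ∀ j ∈ S \ T, η j ≤ η i) →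
      ∑ i ∈ S, u S i ≤ ∑ i ∈ T, u T i) := by
  have hden : 0 < 1 - ((k : ℝ) - 1) * γ := by linarith
  set c : ℝ := γ / (1 - ((k : ℝ) - 1) * γ) with hc
  have hcpos : 0 < c := div_pos hγ0 hden
  -- main utility formula
  have main : ∀ S : Finset (Fin K), S.card = k → ∀ i ∈ S,
      u S i = (R * η i / σ2) * f γ * (1 - ((k : ℝ) - 1) * γ) / γ := by
    intro S hS i hi
    have hpi : p S i = (σ2 / η i) * c := by rw [hp]; simp [hi]
    have hsum : (∑ j ∈ S.erase i, p S j * η j) = ((k : ℝ) - 1) * (σ2 * c) := by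
      have h1 : ∀ j ∈ S.erase i, p S j * η j = σ2 * c := by
        intro j hj
        have hjS : j ∈ S := Finset.mem_of_mem_erase hj
        rw [hp]
        simp only [hjS, if_true]
        field_simp [ne_of_gt (hη j)]
      rw [Finset.sum_congr rfl h1, Finset.sum_const, Finset.card_erase_of_mem hi, hS]
      have : ((k - 1 : ℕ) : ℝ) = (k : ℝ) - 1 := by
        push_cast [Nat.cast_sub hk]; ring
      rw [nsmul_eq_mul, this]
    have hηi := hη i
    have harg : p S i * η i / ((∑ j ∈ S.erase i, p S j * η j) + σ2) = γ := by
      rw [hsum, hpi]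
      have hpiη : σ2 / η i * c * η i = σ2 * c := by
        field_simp [ne_of_gt hηi]
      rw [hpiη, hc]
      have hne : (1 - ((k : ℝ) - 1) * γ) ≠ 0 := ne_of_gt hden
      field_simp [ne_of_gt hσ]
      have hd : ((k:ℝ)-1)*(σ2*γ)+σ2*(1-((k:ℝ)-1)*γ) = σ2 := by ring
      have hne' : (1 - γ * ((k:ℝ) - 1)) ≠ 0 := by rw [mul_comm]; exact hne
      rw [mul_add, mul_div_cancel₀ _ hne']; ring_nf
    rw [hu, if_pos hi, harg, hpi, hc]
    have hne : (1 - ((k : ℝ) - 1) * γ) ≠ 0 := ne_of_gt hden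
    field_simp [ne_of_gt hηi, ne_of_gt hσ, ne_of_gt hγ0]
  have hCpos : 0 < (R / σ2) * f γ * (1 - ((k : ℝ) - 1) * γ) / γ :=
    div_pos (mul_pos (mul_pos (div_pos hR hσ) hfγ) hden) hγ0
  have main' : ∀ S : Finset (Fin K), S.card = k → ∀ i ∈ S,
      u S i = ((R / σ2) * f γ * (1 - ((k : ℝ) - 1) * γ) / γ) * η i := by
    intro S hS i hi
    rw [main S hS i hi]; ring
  refine ⟨main, ?_, ?_⟩
  · intro S hS i hi j hj hij
    rw [main' S hS i hi, main' S hS j hj]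
    exact mul_lt_mul_of_pos_left hij hCpos
  · intro S T hS hT hcond
    have hSsum : ∑ i ∈ S, u S i
        = ((R / σ2) * f γ * (1 - ((k : ℝ) - 1) * γ) / γ) * ∑ i ∈ S, η i := by
      rw [Finset.mul_sum]; exact Finset.sum_congr rfl (fun i hi => main' S hS i hi)
    have hTsum : ∑ i ∈ T, u T i
        = ((R / σ2) * f γ * (1 - ((k : ℝ) - 1) * γ) / γ) * ∑ i ∈ T, η i := by
      rw [Finset.mul_sum]; exact Finset.sum_congr rfl (fun i hi => main' T hT i hi)
    rw [hSsum, hTsum]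
    apply mul_le_mul_of_nonneg_left _ (le_of_lt hCpos)
    -- it suffices to compare sums over S \ T and T \ S
    have hcard : (S \ T).card = (T \ S).card := by
      have h1 := Finset.card_sdiff_add_card_inter S T
      have h2 := Finset.card_sdiff_add_card_inter T S
      rw [Finset.inter_comm] at h2
      omega
    have key : ∑ i ∈ S \ T, η i ≤ ∑ i ∈ T \ S, η i := by
      rcases Finset.eq_empty_or_nonempty (T \ S) with he | hne
      · have : (S \ T) = ∅ := Finset.card_eq_zero.mp (by rw [hcard, he]; simp)
        simp [this, he]
      · obtain ⟨m, hm, hmin⟩ := (T \ S).exists_min_image η hne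
        calc ∑ i ∈ S \ T, η i ≤ (S \ T).card • η m := by
              apply Finset.sum_le_card_nsmul
              intro j hj
              exact hcond m hm j hj
          _ = (T \ S).card • η m := by rw [hcard]
          _ ≤ ∑ i ∈ T \ S, η i := Finset.card_nsmul_le_sum _ _ _ (fun i hi => hmin i hi)
    have h1 : ∑ i ∈ S ∩ T, η i + ∑ i ∈ S \ T, η i = ∑ i ∈ S, η i :=
      Finset.sum_inter_add_sum_sdiff S T η
    have h2 : ∑ i ∈ T ∩ S, η i + ∑ i ∈ T \ S, η i = ∑ i ∈ T, η i :=
      Finset.sum_inter_add_sum_sdiff T S η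
    rw [Finset.inter_comm] at h2
    linarith
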